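/- For every positive integer k, 2^(4·3^(k-1)) ≡ 2·3^k + 1 (mod 3^(k+1)); in particular, the k-th ternary digit (0-indexed) of 2^(2·u_k), where u_k := 2·3^(k-1), equals 2. -/

import Mathlib

lemma aux_int (j : ℕ) : (2:ℤ) ^ (4 * 3 ^ j) ≡ 2 * 3 ^ (j + 1) + 1 [ZMOD 3 ^ (j + 2)] := by
  induction j with
  | zero => decide
  | succ j ih =>
    obtain ⟨t, ht⟩ := (Int.modEq_iff_dvd.mp ih.symm)
    have hpow : (2:ℤ) ^ (4 * 3 ^ (j + 1)) = ((2:ℤ) ^ (4 * 3 ^ j)) ^ 3 := by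
      rw [← pow_mul]; congr 1; ring
    have ha : (2:ℤ) ^ (4 * 3 ^ j) = 2 * 3 ^ (j + 1) + 1 + 3 ^ (j + 2) * t := by
      linarith [ht]
    refine Int.ModEq.symm (Int.modEq_iff_dvd.mpr ?_)
    rw [hpow, ha]
    exact ⟨t + 3 ^ j * (2 + 3 * t) ^ 2 + (3 ^ j) ^ 2 * (2 + 3 * t) ^ 3, by ring⟩

/-- For every positive integer `k`, `2 ^ (4 * 3 ^ (k - 1)) ≡ 2 * 3 ^ k + 1 [MOD 3 ^ (k + 1)]`;
in particular, the `k`-th ternary digit (0-indexed) of `2 ^ (2 * u_k)`,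
where `u_k := 2 * 3 ^ (k - 1)`, equals `2`. -/
theorem two_pow_double_unit_modEq (k : ℕ) (hk : 0 < k) :
    2 ^ (4 * 3 ^ (k - 1)) ≡ 2 * 3 ^ k + 1 [MOD 3 ^ (k + 1)] ∧
      2 ^ (2 * (2 * 3 ^ (k - 1))) / 3 ^ k % 3 = 2 := by
  obtain ⟨j, rfl⟩ : ∃ j, k = j + 1 := ⟨k - 1, by omega⟩
  have h : 2 ^ (4 * 3 ^ (j + 1 - 1)) ≡ 2 * 3 ^ (j + 1) + 1 [MOD 3 ^ (j + 1 + 1)] := by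
    have := aux_int j
    rw [show j + 1 - 1 = j from rfl]
    have h2 : ((2:ℕ):ℤ) ^ (4 * 3 ^ j) ≡ ((2 * 3 ^ (j + 1) + 1 : ℕ) : ℤ)
        [ZMOD ((3 ^ (j + 2) : ℕ) : ℤ)] := by push_cast; exact this
    rw [← Int.natCast_pow] at h2
    exact Int.natCast_modEq_iff.mp h2
  refine ⟨h, ?_⟩
  have he : 2 * (2 * 3 ^ (j + 1 - 1)) = 4 * 3 ^ (j + 1 - 1) := by ring
  rw [he]
  have hmod : 2 ^ (4 * 3 ^ (j + 1 - 1)) % 3 ^ (j + 1 + 1) = 2 * 3 ^ (j + 1) + 1 := by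
    rw [h]
    exact Nat.mod_eq_of_lt (by
      have h1 : (1:ℕ) ≤ 3 ^ (j + 1) := Nat.one_le_pow _ _ (by norm_num)
      calc 2 * 3 ^ (j + 1) + 1 < 3 * 3 ^ (j + 1) := by omega
        _ = 3 ^ (j + 1 + 1) := by ring)
  rw [← Nat.mod_mul_right_div_self, show 3 ^ (j + 1) * 3 = 3 ^ (j + 1 + 1) from by ring,
    hmod, Nat.mul_comm 2, Nat.mul_add_div (Nat.pow_pos (by norm_num)),
    Nat.div_eq_of_lt (Nat.one_lt_pow (by omega) (by norm_num))]
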